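/- Let X be a convex subset of a real Banach space and let F : X × X → ℝ satisfy: (A1) F is uniformly α-strongly convex in its second argument (for all x,y,z ∈ X, F(z,x) ≥ F(z,y) + ⟨∇₂F(z,y), x−y⟩ + (α/2)‖x−y‖²); (A2) F is uniformly G₂-Lipschitz in its second argument; (A3) ∇₂F is uniformly β-Lipschitz in its first argument (‖∇₂F(x,z) − ∇₂F(y,z)‖_* ≤ β‖x−y‖ for all x,y,z ∈ X). Set θ = β/α and suppose θ < 1. Let (x_n) be the value-aggregation sequence: x₁ ∈ X and x_{n+1} ∈ argmin_{x∈X} Σ_{k=1}^n F(x_k, x). Then Σ_{n=1}^∞ ‖x_{n+1} − x_n‖ < ∞, and consequently the sequence (x_n) converges. -/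

import Mathlib

set_option maxHeartbeats 1000000

open Finset

lemma qg_aux
    {E : Type*} [NormedAddCommGroup E] [NormedSpace ℝ E]
    {X : Set E} (hX : Convex ℝ X)
    (f : ℕ → E → ℝ) (g : ℕ → E → E →L[ℝ] ℝ) (α : ℝ) (s : Finset ℕ)
    (hA1 : ∀ k ∈ s, ∀ y ∈ X, ∀ z ∈ X,
      f k z ≥ f k y + g k y (z - y) + α / 2 * ‖z - y‖ ^ 2)
    {w : E} (hw : w ∈ X) (hmin : ∀ y ∈ X, ∑ k ∈ s, f k w ≤ ∑ k ∈ s, f k y)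
    {y : E} (hy : y ∈ X) :
    ∑ k ∈ s, f k w + (s.card : ℝ) * (α / 2) * ‖y - w‖ ^ 2 ≤ ∑ k ∈ s, f k y := by
  set Q : ℝ := ‖y - w‖ ^ 2 with hQ
  have hQ0 : 0 ≤ Q := by positivity
  have key : ∀ t : ℝ, 0 < t → t ≤ 1 →
      ∑ k ∈ s, f k w + (s.card : ℝ) * (α / 2) * ((1 - t) * Q) ≤ ∑ k ∈ s, f k y := by
    intro t ht0 ht1
    set d : E := y - w with hd
    set m : E := w + t • d with hm
    have hmX : m ∈ X := hX.add_smul_sub_mem hw hy ⟨ht0.le, ht1⟩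
    have hwm : w - m = -(t • d) := by rw [hm]; abel
    have hym : y - m = (1 - t) • d := by
      rw [hm, hd, sub_smul, one_smul]; abel
    have hnwm : ‖w - m‖ ^ 2 = t ^ 2 * Q := by
      rw [hwm, norm_neg, norm_smul, Real.norm_eq_abs, abs_of_pos ht0, mul_pow, hQ]
    have hnym : ‖y - m‖ ^ 2 = (1 - t) ^ 2 * Q := by
      rw [hym, norm_smul, Real.norm_eq_abs, abs_of_nonneg (by linarith), mul_pow, hQ]
    have hper : ∀ k ∈ s,
        f k m + α / 2 * (t * (1 - t)) * Q ≤ (1 - t) * f k w + t * f k y := by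
      intro k hk
      have h1 := hA1 k hk m hmX w hw
      have h2 := hA1 k hk m hmX y hy
      rw [hnwm] at h1
      rw [hnym] at h2
      have hgw : g k m (w - m) = -(t * g k m d) := by
        rw [hwm, map_neg, map_smul]; simp
      have hgy : g k m (y - m) = (1 - t) * g k m d := by
        rw [hym, map_smul]; simp
      rw [hgw] at h1
      rw [hgy] at h2
      nlinarith [mul_le_mul_of_nonneg_left h1 (by linarith : (0:ℝ) ≤ 1 - t),
        mul_le_mul_of_nonneg_left h2 ht0.le]
    have hsum : ∑ k ∈ s, f k m + (s.card : ℝ) * (α / 2 * (t * (1 - t)) * Q)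
        ≤ (1 - t) * ∑ k ∈ s, f k w + t * ∑ k ∈ s, f k y := by
      have h := Finset.sum_le_sum hper
      rw [Finset.sum_add_distrib, Finset.sum_const, nsmul_eq_mul] at h
      calc ∑ k ∈ s, f k m + (s.card : ℝ) * (α / 2 * (t * (1 - t)) * Q) ≤ _ := h
        _ = (1 - t) * ∑ k ∈ s, f k w + t * ∑ k ∈ s, f k y := by
            rw [Finset.sum_add_distrib, ← Finset.mul_sum, ← Finset.mul_sum]
    have h3 : t * ((s.card : ℝ) * (α / 2) * ((1 - t) * Q))
        ≤ t * (∑ k ∈ s, f k y - ∑ k ∈ s, f k w) := by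
      nlinarith [hsum, hmin m hmX]
    have h4 := le_of_mul_le_mul_left h3 ht0
    linarith
  have htend : Filter.Tendsto
      (fun j : ℕ => ∑ k ∈ s, f k w + (s.card : ℝ) * (α / 2) * ((1 - 1 / ((j:ℝ) + 1)) * Q))
      Filter.atTop (nhds (∑ k ∈ s, f k w + (s.card : ℝ) * (α / 2) * ((1 - 0) * Q))) := by
    exact Filter.Tendsto.const_add _
      (Filter.Tendsto.const_mul _ (((tendsto_const_nhds.sub
        tendsto_one_div_add_atTop_nhds_zero_nat)).mul tendsto_const_nhds))
  have hle := le_of_tendsto htend (Filter.Eventually.of_forall (fun j => by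
    refine key (1 / ((j:ℝ) + 1)) (by positivity) ?_
    rw [div_le_one (by positivity)]
    linarith [Nat.cast_nonneg (α := ℝ) j]))
  simpa using hle
open Finset

lemma swap_aux (a : ℕ → ℝ) (n : ℕ) :
    ∑ k ∈ Icc 1 n, ∑ j ∈ Icc k n, a j = ∑ j ∈ Icc 1 n, (j : ℝ) * a j := by
  rw [Finset.sum_comm' (s' := fun j => Icc 1 j) (t' := Icc 1 n)
    (by intro k j; simp only [mem_Icc]; omega)]
  refine Finset.sum_congr rfl fun j hj => ?_
  rw [Finset.sum_const, Nat.card_Icc, nsmul_eq_mul]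
  norm_num

lemma harm_aux : ∀ n : ℕ, 1 ≤ n → ∑ k ∈ Icc 1 n, 1 / (k : ℝ) ≤ 1 + Real.log n := by
  intro n hn
  induction n, hn using Nat.le_induction with
  | base => simp
  | succ n hn ih =>
    rw [Finset.sum_Icc_succ_top (by omega)]
    have hlog : Real.log n + 1 / ((n : ℝ) + 1) ≤ Real.log (n + 1) := by
      have h1 : (0:ℝ) < n := by exact_mod_cast hn
      have h2 : 1 - (((n:ℝ)+1)/n)⁻¹ ≤ Real.log (((n:ℝ)+1)/n) :=
        Real.one_sub_inv_le_log_of_pos (by positivity)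
      rw [Real.log_div (by positivity) (by positivity)] at h2
      have : (((n:ℝ)+1)/n)⁻¹ = n/((n:ℝ)+1) := by rw [inv_div]
      rw [this] at h2
      have : 1 - (n:ℝ)/((n:ℝ)+1) = 1/((n:ℝ)+1) := by field_simp; ring
      rw [this] at h2
      linarith
    push_cast
    linarith

lemma sq_aux : ∀ n : ℕ, 1 ≤ n → ∑ k ∈ Icc 1 n, 1 / (k : ℝ) ^ 2 ≤ 2 - 1 / (n : ℝ) := by
  intro n hn
  induction n, hn using Nat.le_induction with
  | base => norm_num
  | succ n hn ih =>
    rw [Finset.sum_Icc_succ_top (by omega)]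
    have h1 : (0:ℝ) < n := by exact_mod_cast hn
    have key : 1 / ((n:ℝ)+1) ^ 2 ≤ 1 / (n:ℝ) - 1 / ((n:ℝ)+1) := by
      rw [div_sub_div _ _ (by positivity) (by positivity)]
      rw [div_le_div_iff₀ (by positivity) (by positivity)]
      ring_nf
      nlinarith
    push_cast
    linarith


/-- Convergence of the value-aggregation sequence when `θ < 1`.
`X` is a convex subset of a real Banach space.  Under uniform `α`-strong convexity in
the second argument, uniform `G₂`-Lipschitzness in the second argument, and uniform
`β`-Lipschitzness of `∇₂F` in the first argument, with `θ = β/α < 1`, the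
Follow-the-Leader sequence has summable consecutive increments and hence converges. -/
theorem stmt_1
    {E : Type*} [NormedAddCommGroup E] [NormedSpace ℝ E] [CompleteSpace E]
    (X : Set E) (hX : Convex ℝ X)
    (F : E → E → ℝ) (D2F : E → E → (E →L[ℝ] ℝ))
    (α G₂ β θ : ℝ) (hα : 0 < α) (hG₂ : 0 < G₂) (hβ : 0 ≤ β)
    (hgrad : ∀ z ∈ X, ∀ y ∈ X, HasFDerivWithinAt (F z) (D2F z y) X y)
    (hA1 : ∀ z ∈ X, ∀ y ∈ X, ∀ x ∈ X,
      F z x ≥ F z y + D2F z y (x - y) + α / 2 * ‖x - y‖ ^ 2)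
    (hA2 : ∀ z ∈ X, ∀ x ∈ X, ∀ y ∈ X, |F z x - F z y| ≤ G₂ * ‖x - y‖)
    (hA3 : ∀ x ∈ X, ∀ y ∈ X, ∀ z ∈ X, ‖D2F x z - D2F y z‖ ≤ β * ‖x - y‖)
    (hθ : θ = β / α) (hθ1 : θ < 1)
    (x : ℕ → E) (hmem : ∀ n, 1 ≤ n → x n ∈ X)
    (hftl : ∀ n, 1 ≤ n → ∀ y ∈ X,
      ∑ k ∈ Finset.Icc 1 n, F (x k) (x (n + 1)) ≤ ∑ k ∈ Finset.Icc 1 n, F (x k) y) :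
    Summable (fun n : ℕ => ‖x (n + 1) - x n‖) ∧
      ∃ l : E, Filter.Tendsto x Filter.atTop (nhds l) := by
    classical
  have hθ0 : 0 ≤ θ := by rw [hθ]; exact div_nonneg hβ hα.le
  set Δ : ℕ → ℝ := fun j => ‖x (j + 1) - x j‖ with hΔdef
  have hΔ0 : ∀ j, 0 ≤ Δ j := fun j => norm_nonneg _
  set S : ℕ → ℝ := fun n => ∑ j ∈ Finset.Icc 1 n, (j : ℝ) * Δ j with hSdef
  have hS0 : ∀ n, 0 ≤ S n := fun n =>
    Finset.sum_nonneg fun j _ => mul_nonneg (Nat.cast_nonneg j) (hΔ0 j)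
  -- main recursion
  have hrec : ∀ n : ℕ, 1 ≤ n → Δ (n + 1) ≤ 2 * θ / ((n : ℝ) * (2 * n + 1)) * S n := by
    intro n hn
    have hnpos : (0 : ℝ) < n := by exact_mod_cast hn
    have hx1 : x (n + 1) ∈ X := hmem _ (by omega)
    have hx2 : x (n + 2) ∈ X := hmem _ (by omega)
    have hA1' : ∀ k ∈ Finset.Icc 1 (n + 1), ∀ y ∈ X, ∀ z ∈ X,
        F (x k) z ≥ F (x k) y + D2F (x k) y (z - y) + α / 2 * ‖z - y‖ ^ 2 := by
      intro k hk y hy z hz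
      exact hA1 (x k) (hmem k (Finset.mem_Icc.mp hk).1) y hy z hz
    have hA1'' : ∀ k ∈ Finset.Icc 1 n, ∀ y ∈ X, ∀ z ∈ X,
        F (x k) z ≥ F (x k) y + D2F (x k) y (z - y) + α / 2 * ‖z - y‖ ^ 2 := by
      intro k hk y hy z hz
      exact hA1 (x k) (hmem k (Finset.mem_Icc.mp hk).1) y hy z hz
    have QG1 := qg_aux hX (fun k => F (x k)) (fun k => D2F (x k)) α (Finset.Icc 1 n)
      hA1'' hx1 (hftl n hn) hx2
    have QG2 := qg_aux hX (fun k => F (x k)) (fun k => D2F (x k)) α (Finset.Icc 1 (n + 1))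
      hA1' hx2 (hftl (n + 1) (by omega)) hx1
    rw [Nat.card_Icc] at QG1 QG2
    have hsplit : ∀ z : E, ∑ k ∈ Finset.Icc 1 (n + 1), F (x k) z
        = ∑ k ∈ Finset.Icc 1 n, F (x k) z + F (x (n + 1)) z := fun z =>
      Finset.sum_Icc_succ_top (by omega) _
    have e1 : ‖x (n + 2) - x (n + 1)‖ = Δ (n + 1) := rfl
    have e2 : ‖x (n + 1) - x (n + 2)‖ = Δ (n + 1) := by rw [norm_sub_rev]
    have hstar : (2 * (n : ℝ) + 1) * (α / 2) * Δ (n + 1) ^ 2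
        ≤ F (x (n + 1)) (x (n + 1)) - F (x (n + 1)) (x (n + 2)) := by
      rw [hsplit, hsplit] at QG2
      rw [e2] at QG2
      rw [e1] at QG1
      simp only [Nat.add_sub_cancel] at QG1 QG2
      push_cast at QG1 QG2
      nlinarith [QG1, QG2]
    have hlip : ∀ k ∈ Finset.Icc 1 n,
        F (x (n + 1)) (x (n + 1)) - F (x (n + 1)) (x (n + 2))
          ≤ (F (x k) (x (n + 1)) - F (x k) (x (n + 2)))
            + β * ‖x (n + 1) - x k‖ * Δ (n + 1) := by
      intro k hk
      have hxk : x k ∈ X := hmem k (Finset.mem_Icc.mp hk).1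
      have hder : ∀ z ∈ X, HasFDerivWithinAt (fun z => F (x (n + 1)) z - F (x k) z)
          (D2F (x (n + 1)) z - D2F (x k) z) X z :=
        fun z hz => (hgrad _ hx1 z hz).sub (hgrad _ hxk z hz)
      have hbd : ∀ z ∈ X, ‖D2F (x (n + 1)) z - D2F (x k) z‖ ≤ β * ‖x (n + 1) - x k‖ :=
        fun z hz => hA3 _ hx1 _ hxk z hz
      have hmv := Convex.norm_image_sub_le_of_norm_hasFDerivWithin_le hder hbd hX hx2 hx1
      rw [Real.norm_eq_abs, e2] at hmv
      have habs := (le_abs_self _).trans hmv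
      linarith [habs]
    have hT : ∑ k ∈ Finset.Icc 1 n, ‖x (n + 1) - x k‖ ≤ S n := by
      have h1 : ∀ k ∈ Finset.Icc 1 n, ‖x (n + 1) - x k‖ ≤ ∑ j ∈ Finset.Icc k n, Δ j := by
        intro k hk
        have hk1 : k ≤ n + 1 := by
          have := (Finset.mem_Icc.mp hk).2; omega
        have hd := dist_le_Ico_sum_dist x hk1
        rw [Finset.Ico_add_one_right_eq_Icc] at hd
        calc ‖x (n + 1) - x k‖ = dist (x k) (x (n + 1)) := by
              rw [dist_comm, dist_eq_norm]
          _ ≤ ∑ i ∈ Finset.Icc k n, dist (x i) (x (i + 1)) := hd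
          _ = ∑ i ∈ Finset.Icc k n, Δ i := by
              refine Finset.sum_congr rfl fun i _ => ?_
              rw [dist_eq_norm, norm_sub_rev]
      calc ∑ k ∈ Finset.Icc 1 n, ‖x (n + 1) - x k‖
          ≤ ∑ k ∈ Finset.Icc 1 n, ∑ j ∈ Finset.Icc k n, Δ j := Finset.sum_le_sum h1
        _ = S n := swap_aux Δ n
    have hmain : (n : ℝ) * ((2 * (n : ℝ) + 1) * (α / 2) * Δ (n + 1) ^ 2)
        ≤ β * Δ (n + 1) * S n := by
      have hc : (n : ℝ) * (F (x (n + 1)) (x (n + 1)) - F (x (n + 1)) (x (n + 2)))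
          = ∑ _k ∈ Finset.Icc 1 n,
              (F (x (n + 1)) (x (n + 1)) - F (x (n + 1)) (x (n + 2))) := by
        rw [Finset.sum_const, Nat.card_Icc, Nat.add_sub_cancel, nsmul_eq_mul]
      have h2 := Finset.sum_le_sum hlip
      rw [Finset.sum_add_distrib, ← hc] at h2
      have hsub : ∑ k ∈ Finset.Icc 1 n, (F (x k) (x (n + 1)) - F (x k) (x (n + 2)))
          = ∑ k ∈ Finset.Icc 1 n, F (x k) (x (n + 1))
            - ∑ k ∈ Finset.Icc 1 n, F (x k) (x (n + 2)) := Finset.sum_sub_distrib _ _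
      have h3 : ∑ k ∈ Finset.Icc 1 n, F (x k) (x (n + 1))
          - ∑ k ∈ Finset.Icc 1 n, F (x k) (x (n + 2)) ≤ 0 := by
        have := hftl n hn (x (n + 2)) hx2
        linarith
      have h4 : ∑ k ∈ Finset.Icc 1 n, β * ‖x (n + 1) - x k‖ * Δ (n + 1)
          ≤ β * Δ (n + 1) * S n := by
        have : ∑ k ∈ Finset.Icc 1 n, β * ‖x (n + 1) - x k‖ * Δ (n + 1)
            = β * Δ (n + 1) * ∑ k ∈ Finset.Icc 1 n, ‖x (n + 1) - x k‖ := by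
          rw [Finset.mul_sum]
          exact Finset.sum_congr rfl fun k _ => by ring
        rw [this]
        exact mul_le_mul_of_nonneg_left hT (by positivity)
      have h5 : (n : ℝ) * ((2 * (n : ℝ) + 1) * (α / 2) * Δ (n + 1) ^ 2)
          ≤ (n : ℝ) * (F (x (n + 1)) (x (n + 1)) - F (x (n + 1)) (x (n + 2))) :=
        mul_le_mul_of_nonneg_left hstar (by positivity)
      rw [hc] at h5
      linarith
    by_cases hz : Δ (n + 1) = 0
    · rw [hz]
      exact mul_nonneg (div_nonneg (by linarith) (by positivity)) (hS0 n)
    · have hΔpos : 0 < Δ (n + 1) := lt_of_le_of_ne (hΔ0 _) (Ne.symm hz)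
      have h6 : (n : ℝ) * (2 * (n : ℝ) + 1) * (α / 2) * Δ (n + 1) ≤ β * S n := by
        have h7 : ((n : ℝ) * (2 * (n : ℝ) + 1) * (α / 2) * Δ (n + 1)) * Δ (n + 1)
            ≤ (β * S n) * Δ (n + 1) := by nlinarith [hmain]
        exact le_of_mul_le_mul_right h7 hΔpos
      have hpos2 : 0 < (n : ℝ) * (2 * (n : ℝ) + 1) * (α / 2) := by positivity
      have h8 : Δ (n + 1) ≤ β * S n / ((n : ℝ) * (2 * (n : ℝ) + 1) * (α / 2)) :=
        (le_div_iff₀ hpos2).mpr (by linarith)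
      have h9 : β * S n / ((n : ℝ) * (2 * (n : ℝ) + 1) * (α / 2))
          = 2 * θ / ((n : ℝ) * (2 * n + 1)) * S n := by
        rw [hθ]
        field_simp
      linarith [h8, h9.symm.le]
  -- step inequality for S
  have hstep : ∀ n : ℕ, 1 ≤ n →
      S (n + 1) ≤ S n * Real.exp (θ * (1 / (n : ℝ) + 1 / (n : ℝ) ^ 2)) := by
    intro n hn
    have hnpos : (0 : ℝ) < n := by exact_mod_cast hn
    have h1 : S (n + 1) = S n + ((n : ℝ) + 1) * Δ (n + 1) := by
      simp only [hSdef]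
      rw [Finset.sum_Icc_succ_top (by omega : 1 ≤ n + 1)]
      push_cast
      ring
    have h2 := hrec n hn
    have h3 : 2 * ((n : ℝ) + 1) / ((n : ℝ) * (2 * n + 1)) ≤ 1 / (n : ℝ) + 1 / (n : ℝ) ^ 2 := by
      rw [div_add_div _ _ (by positivity) (by positivity),
        div_le_div_iff₀ (by positivity) (by positivity)]
      ring_nf
      nlinarith [hnpos]
    have h4 : ((n : ℝ) + 1) * Δ (n + 1) ≤ θ * (1 / (n : ℝ) + 1 / (n : ℝ) ^ 2) * S n := by
      have h5 : ((n : ℝ) + 1) * Δ (n + 1)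
          ≤ ((n : ℝ) + 1) * (2 * θ / ((n : ℝ) * (2 * n + 1)) * S n) :=
        mul_le_mul_of_nonneg_left h2 (by positivity)
      have h6 : ((n : ℝ) + 1) * (2 * θ / ((n : ℝ) * (2 * n + 1)) * S n)
          = θ * (2 * ((n : ℝ) + 1) / ((n : ℝ) * (2 * n + 1))) * S n := by
        field_simp
      rw [h6] at h5
      have h7 : θ * (2 * ((n : ℝ) + 1) / ((n : ℝ) * (2 * n + 1))) * S n
          ≤ θ * (1 / (n : ℝ) + 1 / (n : ℝ) ^ 2) * S n := by
        apply mul_le_mul_of_nonneg_right _ (hS0 n)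
        exact mul_le_mul_of_nonneg_left h3 hθ0
      linarith
    have h8 : S n * (1 + θ * (1 / (n : ℝ) + 1 / (n : ℝ) ^ 2))
        ≤ S n * Real.exp (θ * (1 / (n : ℝ) + 1 / (n : ℝ) ^ 2)) := by
      apply mul_le_mul_of_nonneg_left _ (hS0 n)
      linarith [Real.add_one_le_exp (θ * (1 / (n : ℝ) + 1 / (n : ℝ) ^ 2))]
    nlinarith [h1, h4, h8]
  -- iterated growth
  have hinv : ∀ n : ℕ, S (n + 1)
      ≤ S 1 * Real.exp (θ * ∑ k ∈ Finset.Icc 1 n, (1 / (k : ℝ) + 1 / (k : ℝ) ^ 2)) := by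
    intro n
    induction n with
    | zero => simp
    | succ n ih =>
      calc S (n + 2) ≤ S (n + 1)
            * Real.exp (θ * (1 / ((n : ℝ) + 1) + 1 / ((n : ℝ) + 1) ^ 2)) := by
              have := hstep (n + 1) (by omega)
              push_cast at this ⊢
              exact this
        _ ≤ (S 1 * Real.exp (θ * ∑ k ∈ Finset.Icc 1 n, (1 / (k : ℝ) + 1 / (k : ℝ) ^ 2)))
            * Real.exp (θ * (1 / ((n : ℝ) + 1) + 1 / ((n : ℝ) + 1) ^ 2)) :=
              mul_le_mul_of_nonneg_right ih (Real.exp_pos _).le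
        _ = S 1 * Real.exp (θ * ∑ k ∈ Finset.Icc 1 (n + 1),
              (1 / (k : ℝ) + 1 / (k : ℝ) ^ 2)) := by
            rw [Finset.sum_Icc_succ_top (by omega : 1 ≤ n + 1),
              show ((n + 1 : ℕ) : ℝ) = (n : ℝ) + 1 from by push_cast; ring,
              mul_add θ (∑ k ∈ Finset.Icc 1 n, (1 / (k : ℝ) + 1 / (k : ℝ) ^ 2)) _,
              Real.exp_add, ← mul_assoc]
  -- polynomial growth of S
  have hgrow : ∀ n : ℕ, 1 ≤ n → S n ≤ S 1 * Real.exp (3 * θ) * (n : ℝ) ^ θ := by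
    intro n hn
    obtain ⟨m, rfl⟩ : ∃ m, n = m + 1 := ⟨n - 1, by omega⟩
    have hmpos : (0 : ℝ) < (m : ℝ) + 1 := by positivity
    have hA : ∑ k ∈ Finset.Icc 1 m, (1 / (k : ℝ) + 1 / (k : ℝ) ^ 2)
        ≤ 3 + Real.log ((m : ℝ) + 1) := by
      rcases Nat.eq_zero_or_pos m with h | h
      · subst h
        rw [show Finset.Icc 1 0 = (∅ : Finset ℕ) from rfl]
        simp only [Finset.sum_empty]
        rw [show ((0:ℕ):ℝ) + 1 = 1 by norm_num, Real.log_one]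
        norm_num
      · rw [Finset.sum_add_distrib]
        have hh := harm_aux m h
        have hs := sq_aux m h
        have hmp : (0 : ℝ) < m := by exact_mod_cast h
        have hlog : Real.log m ≤ Real.log ((m : ℝ) + 1) :=
          Real.log_le_log hmp (by linarith)
        have hinvm : 0 < 1 / (m : ℝ) := by positivity
        linarith
    have h1 := hinv m
    have h2 : Real.exp (θ * ∑ k ∈ Finset.Icc 1 m, (1 / (k : ℝ) + 1 / (k : ℝ) ^ 2))
        ≤ Real.exp (θ * (3 + Real.log ((m : ℝ) + 1))) :=
      Real.exp_le_exp.mpr (mul_le_mul_of_nonneg_left hA hθ0)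
    have h3 : Real.exp (θ * (3 + Real.log ((m : ℝ) + 1)))
        = Real.exp (3 * θ) * ((m : ℝ) + 1) ^ θ := by
      rw [Real.rpow_def_of_pos hmpos, mul_add, Real.exp_add]
      ring_nf
    have h4 : S (m + 1) ≤ S 1 * Real.exp (θ * (3 + Real.log ((m : ℝ) + 1))) :=
      h1.trans (mul_le_mul_of_nonneg_left h2 (hS0 1))
    rw [h3] at h4
    rw [show ((m + 1 : ℕ) : ℝ) = (m : ℝ) + 1 from by push_cast; ring]
    exact h4.trans (le_of_eq (mul_assoc _ _ _).symm)
  -- final pointwise bound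
  set C : ℝ := θ * (S 1 * Real.exp (3 * θ)) with hCdef
  have hC0 : 0 ≤ C := mul_nonneg hθ0 (mul_nonneg (hS0 1) (Real.exp_pos _).le)
  have hfinal : ∀ n : ℕ, 1 ≤ n → Δ (n + 1) ≤ C * (n : ℝ) ^ (θ - 2) := by
    intro n hn
    have hnpos : (0 : ℝ) < n := by exact_mod_cast hn
    have h1 := hrec n hn
    have h2 := hgrow n hn
    have h3 : 2 * θ / ((n : ℝ) * (2 * n + 1)) ≤ θ / (n : ℝ) ^ 2 := by
      rw [div_le_div_iff₀ (by positivity) (by positivity)]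
      nlinarith [hθ0, hnpos]
    have h4 : Δ (n + 1) ≤ θ / (n : ℝ) ^ 2 * (S 1 * Real.exp (3 * θ) * (n : ℝ) ^ θ) := by
      calc Δ (n + 1) ≤ 2 * θ / ((n : ℝ) * (2 * n + 1)) * S n := h1
        _ ≤ θ / (n : ℝ) ^ 2 * (S 1 * Real.exp (3 * θ) * (n : ℝ) ^ θ) :=
            mul_le_mul h3 h2 (hS0 n) (by positivity)
    have h5 : θ / (n : ℝ) ^ 2 * (S 1 * Real.exp (3 * θ) * (n : ℝ) ^ θ)
        = C * ((n : ℝ) ^ θ / (n : ℝ) ^ 2) := by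
      rw [hCdef]
      ring
    have h6 : (n : ℝ) ^ θ / (n : ℝ) ^ 2 = (n : ℝ) ^ (θ - 2) := by
      rw [Real.rpow_sub hnpos]
      congr 1
      rw [show (2 : ℝ) = ((2 : ℕ) : ℝ) by norm_num, Real.rpow_natCast]
    rw [h5, h6] at h4
    exact h4
  -- summability
  have hsum2 : Summable (fun n : ℕ => Δ (n + 2)) := by
    have hs3 : Summable (fun n : ℕ => (n : ℝ) ^ (θ - 2)) :=
      Real.summable_nat_rpow.mpr (by linarith)
    have hs4 : Summable (fun n : ℕ => ((n + 1 : ℕ) : ℝ) ^ (θ - 2)) :=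
      (summable_nat_add_iff 1).mpr hs3
    refine Summable.of_nonneg_of_le (fun n => hΔ0 _) (fun n => ?_) (hs4.mul_left C)
    have := hfinal (n + 1) (by omega)
    push_cast at this ⊢
    convert this using 2 <;> omega
  have hsumΔ : Summable Δ := (summable_nat_add_iff 2).mp hsum2
  refine ⟨hsumΔ, ?_⟩
  have hcs : CauchySeq x := by
    apply cauchySeq_of_summable_dist
    refine hsumΔ.congr fun n => ?_
    rw [hΔdef]
    simp [dist_eq_norm, norm_sub_rev]
  exact cauchySeq_tendsto_of_complete hcs
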